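/- Evolution of the discrete kinetic energy (semi-discrete CPIC in 3D): let w_p ≥ 0, let (x_p(t), v_p(t)) ∈ ℝ³ × ℝ³ be differentiable trajectories satisfying v̇_p = E_p + v_p × B_p − U_p, where × is the vector cross product in ℝ³, U_p = Σ_q w_q ψ(x_p − x_q) A(v_p − v_q) b_{p,q} with ψ even and b_{q,p} = −b_{p,q}, and the electric field at particle p is interpolated from mesh values Ẽ_h ∈ ℝ³ on finitely many mesh points x_h by E_p = Σ_h Ẽ_h ψ(x_p − x_h) η with η > 0 (B_p ∈ ℝ³ arbitrary). Then d/dt (1/2) Σ_p w_p ‖v_p‖² = Σ_h (J̃_h · Ẽ_h) η, where J̃_h = Σ_p w_p v_p ψ(x_h − x_p) is the regularised current at mesh point x_h. -/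

import Mathlib

open Matrix
open scoped Classical

/-- The Landau collision kernel `A(z) = C ‖z‖^(γ+2) (I − z zᵀ/‖z‖²)` for `z ≠ 0`,
with the convention `A(0) = 0`. -/
noncomputable def landauA (d : ℕ) (C γ : ℝ) (z : Fin d → ℝ) :
    Matrix (Fin d) (Fin d) ℝ :=
  if z = 0 then 0
  else (C * Real.sqrt (z ⬝ᵥ z) ^ (γ + 2)) •
    (1 - (z ⬝ᵥ z)⁻¹ • Matrix.vecMulVec z z)

lemma landauA_neg (d : ℕ) (C γ : ℝ) (z : Fin d → ℝ) :
    landauA d C γ (-z) = landauA d C γ z := by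
  unfold landauA
  simp [neg_eq_zero, Matrix.vecMulVec, dotProduct]

lemma landauA_mulVec_self (d : ℕ) (C γ : ℝ) (z : Fin d → ℝ) :
    (landauA d C γ z).mulVec z = 0 := by
  unfold landauA
  by_cases hz : z = 0
  · simp [hz]
  · have hzz : z ⬝ᵥ z ≠ 0 := by
      simpa [dotProduct_self_eq_zero] using hz
    simp only [if_neg hz, Matrix.smul_mulVec, Matrix.sub_mulVec,
      Matrix.one_mulVec, Matrix.smul_mulVec]
    have : (Matrix.vecMulVec z z).mulVec z = (z ⬝ᵥ z) • z := by
      ext i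
      simp only [Matrix.mulVec, Matrix.vecMulVec_apply, dotProduct,
        Pi.smul_apply, smul_eq_mul, Finset.sum_mul]
      exact Finset.sum_congr rfl fun j _ => by ring
    rw [this, smul_smul, inv_mul_cancel₀ hzz, one_smul, sub_self, smul_zero]

lemma landauA_dot (d : ℕ) (C γ : ℝ) (z bb : Fin d → ℝ) :
    z ⬝ᵥ (landauA d C γ z).mulVec bb = 0 := by
  have hsym : (landauA d C γ z)ᵀ = landauA d C γ z := by
    unfold landauA
    by_cases hz : z = 0
    · simp [hz]
    · simp only [if_neg hz, Matrix.transpose_smul, Matrix.transpose_sub,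
        Matrix.transpose_one, Matrix.transpose_smul]
      congr 2
      ext i j
      simp [Matrix.vecMulVec_apply, mul_comm]
  rw [Matrix.dotProduct_mulVec, ← Matrix.mulVec_transpose, hsym,
    landauA_mulVec_self, zero_dotProduct]

lemma sum_dotProduct' {ι n : Type*} [Fintype n] (s : Finset ι)
    (f : ι → n → ℝ) (g : n → ℝ) : (∑ i ∈ s, f i) ⬝ᵥ g = ∑ i ∈ s, f i ⬝ᵥ g := by
  simp only [dotProduct, Finset.sum_apply, Finset.sum_mul]
  exact Finset.sum_comm


/-- Evolution of the discrete kinetic energy (semi-discrete CPIC in 3D): if the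
particle velocities satisfy `v̇_p = E_p + v_p × B_p − U_p`, with `U_p` the discrete
Landau collision field and `E_p = Σ_h Ẽ_h ψ(x_p − x_h) η` interpolated from mesh
values, then `d/dt (1/2) Σ_p w_p ‖v_p‖² = Σ_h (J̃_h · Ẽ_h) η`, where
`J̃_h = Σ_p w_p v_p ψ(x_h − x_p)` is the regularised current. -/
theorem cpic_kinetic_energy_evolution {N M : ℕ} (C γ : ℝ) (hC : 0 < C)
    (w : Fin N → ℝ) (hw : ∀ p, 0 ≤ w p)
    (x : Fin N → ℝ → Fin 3 → ℝ) (v : Fin N → ℝ → Fin 3 → ℝ)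
    (ψ : (Fin 3 → ℝ) → ℝ) (hψ : ∀ y, ψ (-y) = ψ y)
    (b : Fin N → Fin N → ℝ → Fin 3 → ℝ) (hb : ∀ p q t, b q p t = -(b p q t))
    (U : Fin N → ℝ → Fin 3 → ℝ)
    (hU : ∀ p t, U p t = ∑ q : Fin N,
      (w q * ψ (x p t - x q t)) • (landauA 3 C γ (v p t - v q t)).mulVec (b p q t))
    (xh : Fin M → Fin 3 → ℝ) (Emesh : Fin M → ℝ → Fin 3 → ℝ)
    (η : ℝ) (hη : 0 < η)
    (E : Fin N → ℝ → Fin 3 → ℝ)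
    (hE : ∀ p t, E p t = ∑ h : Fin M, (ψ (x p t - xh h) * η) • Emesh h t)
    (B : Fin N → ℝ → Fin 3 → ℝ)
    (hv : ∀ p t, HasDerivAt (v p)
      (E p t + crossProduct (v p t) (B p t) - U p t) t)
    (J : Fin M → ℝ → Fin 3 → ℝ)
    (hJ : ∀ h t, J h t = ∑ p : Fin N, (w p * ψ (xh h - x p t)) • v p t)
    (t : ℝ) :
    HasDerivAt (fun s => (1 / 2) * ∑ p : Fin N, w p * (v p s ⬝ᵥ v p s))
      (∑ h : Fin M, (J h t ⬝ᵥ Emesh h t) * η) t := by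
  set D : Fin N → Fin 3 → ℝ :=
    fun p => E p t + crossProduct (v p t) (B p t) - U p t with hD
  have key : ∀ p : Fin N, HasDerivAt (fun s => v p s ⬝ᵥ v p s)
      (∑ i : Fin 3, (D p i * v p t i + v p t i * D p i)) t := by
    intro p
    have hp := hasDerivAt_pi.1 (hv p t)
    simp only [dotProduct]
    exact HasDerivAt.fun_sum fun i _ => (hp i).mul (hp i)
  have hder := HasDerivAt.const_mul ((1:ℝ)/2)
    (HasDerivAt.fun_sum (fun p (_ : p ∈ Finset.univ) =>
      HasDerivAt.const_mul (w p) (key p)))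
  convert hder using 1
  case e'_4 => rfl
  case e'_5 => rfl
  -- RHS of the derivative simplifies to ∑ p, w p * (D p ⬝ᵥ v p t)
  have hhalf : ((1:ℝ)/2) * ∑ p : Fin N, w p * ∑ i : Fin 3,
      (D p i * v p t i + v p t i * D p i)
      = ∑ p : Fin N, w p * (D p ⬝ᵥ v p t) := by
    rw [Finset.mul_sum]
    refine Finset.sum_congr rfl fun p _ => ?_
    simp only [dotProduct, Finset.mul_sum]
    refine Finset.sum_congr rfl fun i _ => ?_
    ring
  rw [hhalf]
  -- expand D
  have hDexp : ∀ p : Fin N, w p * (D p ⬝ᵥ v p t)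
      = w p * (E p t ⬝ᵥ v p t) - w p * (U p t ⬝ᵥ v p t) := by
    intro p
    have hcross : crossProduct (v p t) (B p t) ⬝ᵥ v p t = 0 := by
      rw [dotProduct_comm]
      exact dot_self_cross _ _
    simp only [hD, sub_dotProduct, add_dotProduct, hcross]
    ring
  simp only [Finset.sum_congr rfl (fun p _ => hDexp p), Finset.sum_sub_distrib]
  -- collision term vanishes
  have hU0 : ∑ p : Fin N, w p * (U p t ⬝ᵥ v p t) = 0 := by
    set c : Fin N → Fin N → ℝ := fun p q =>
      (w p * w q * ψ (x p t - x q t)) *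
        ((landauA 3 C γ (v p t - v q t)).mulVec (b p q t) ⬝ᵥ v p t) with hc
    have hS : ∑ p : Fin N, w p * (U p t ⬝ᵥ v p t) = ∑ p : Fin N, ∑ q : Fin N, c p q := by
      refine Finset.sum_congr rfl fun p _ => ?_
      rw [hU, sum_dotProduct', Finset.mul_sum]
      refine Finset.sum_congr rfl fun q _ => ?_
      simp only [hc, smul_dotProduct, smul_eq_mul]
      ring
    have hanti : ∀ p q : Fin N, c q p = - c p q := by
      intro p q
      have h1 : x q t - x p t = -(x p t - x q t) := (neg_sub _ _).symm
      have h2 : v q t - v p t = -(v p t - v q t) := (neg_sub _ _).symm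
      have hd := landauA_dot 3 C γ (v p t - v q t) (b p q t)
      rw [dotProduct_comm, dotProduct_sub] at hd
      simp only [hc]
      rw [h1, h2, hψ, landauA_neg, hb p q, Matrix.mulVec_neg, neg_dotProduct]
      linear_combination (w p * w q * ψ (x p t - x q t)) * hd
    rw [hS]
    have h2S : (∑ p : Fin N, ∑ q : Fin N, c p q)
        = - ∑ p : Fin N, ∑ q : Fin N, c p q := by
      conv_lhs => rw [Finset.sum_comm]
      rw [← Finset.sum_neg_distrib]
      refine Finset.sum_congr rfl fun p _ => ?_
      rw [← Finset.sum_neg_distrib]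
      exact Finset.sum_congr rfl fun q _ => hanti p q
    linarith [h2S]
  rw [hU0, sub_zero]
  -- electric term
  symm
  calc ∑ p : Fin N, w p * (E p t ⬝ᵥ v p t)
      = ∑ p : Fin N, ∑ h : Fin M,
        (w p * ψ (xh h - x p t)) * (v p t ⬝ᵥ Emesh h t) * η := by
        refine Finset.sum_congr rfl fun p _ => ?_
        rw [hE, sum_dotProduct', Finset.mul_sum]
        refine Finset.sum_congr rfl fun h _ => ?_
        have : ψ (x p t - xh h) = ψ (xh h - x p t) := by
          rw [← hψ (xh h - x p t), neg_sub]
        rw [smul_dotProduct, this, dotProduct_comm]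
        simp only [smul_eq_mul]; ring
    _ = ∑ h : Fin M, (J h t ⬝ᵥ Emesh h t) * η := by
        rw [Finset.sum_comm]
        refine Finset.sum_congr rfl fun h _ => ?_
        rw [hJ, sum_dotProduct', Finset.sum_mul]
        refine Finset.sum_congr rfl fun p _ => ?_
        rw [smul_dotProduct]
        simp only [smul_eq_mul]
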